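/- Let G be a finite group with group homomorphisms ρX from G to O(n) and ρY from G to O(m), let K ⊆ (Fin n → ℝ) be compact and G-invariant ((ρX g).mulVec x ∈ K whenever x ∈ K), let h : (Fin n → ℝ) → (Fin m → ℝ) be continuous and G-equivariant (h ((ρX g).mulVec x) = (ρY g).mulVec (h x) for all g ∈ G, x), and let ε > 0. Then there exists a polynomial map p : (Fin n → ℝ) → (Fin m → ℝ) (each coordinate given by a real polynomial in the n input coordinates) such that for all x ∈ K, the Euclidean norm of (|G| : ℝ)⁻¹ • ∑ g ∈ G, (ρY g).mulVec (p ((ρX g)⁻¹.mulVec x)) - h x is less than ε. -/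

import Mathlib

open Matrix

noncomputable def euclNorm {m : ℕ} (v : Fin m → ℝ) : ℝ :=
  Real.sqrt (∑ k, (v k) ^ 2)

lemma euclNorm_eq_norm {m : ℕ} (v : Fin m → ℝ) :
    euclNorm v = ‖(WithLp.linearEquiv 2 ℝ (Fin m → ℝ)).symm v‖ := by
  rw [EuclideanSpace.norm_eq]
  simp [euclNorm, Real.norm_eq_abs, sq_abs, WithLp.linearEquiv_symm_apply,
    PiLp.toLp_apply]

lemma euclNorm_mulVec {m : ℕ} (A : Matrix.orthogonalGroup (Fin m) ℝ) (v : Fin m → ℝ) :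
    euclNorm ((A : Matrix (Fin m) (Fin m) ℝ).mulVec v) = euclNorm v := by
  have hA : (A : Matrix (Fin m) (Fin m) ℝ)ᵀ * A = 1 := by
    have := A.2.1
    simpa [star, Matrix.star_eq_conjTranspose, Matrix.conjTranspose] using this
  have key : ∀ w : Fin m → ℝ, (∑ k, w k ^ 2) = w ⬝ᵥ w := by
    intro w; simp [dotProduct, sq]
  unfold euclNorm
  rw [key, key]
  rw [dotProduct_mulVec, ← mulVec_transpose, mulVec_mulVec, hA, one_mulVec]

theorem symmetrized_polynomial_approximation (n m : ℕ)
    (G : Type*) [Group G] [Fintype G]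
    (ρX : G →* Matrix.orthogonalGroup (Fin n) ℝ)
    (ρY : G →* Matrix.orthogonalGroup (Fin m) ℝ)
    (K : Set (Fin n → ℝ)) (hK : IsCompact K)
    (hKinv : ∀ (g : G), ∀ x ∈ K, (ρX g : Matrix (Fin n) (Fin n) ℝ).mulVec x ∈ K)
    (h : (Fin n → ℝ) → (Fin m → ℝ)) (hc : Continuous h)
    (hequiv : ∀ (g : G) (x : Fin n → ℝ),
      h ((ρX g : Matrix (Fin n) (Fin n) ℝ).mulVec x) =
        (ρY g : Matrix (Fin m) (Fin m) ℝ).mulVec (h x))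
    (ε : ℝ) (hε : 0 < ε) :
    ∃ p : Fin m → MvPolynomial (Fin n) ℝ,
      ∀ x ∈ K,
        euclNorm ((Fintype.card G : ℝ)⁻¹ •
          (∑ g : G, ((ρY g : Matrix (Fin m) (Fin m) ℝ)).mulVec
            (fun a => MvPolynomial.eval
              (((ρX g)⁻¹ : Matrix (Fin n) (Fin n) ℝ).mulVec x) (p a))) - h x) < ε := by
  haveI : CompactSpace K := isCompact_iff_compactSpace.mp hK
  set φ : MvPolynomial (Fin n) ℝ →ₐ[ℝ] C(K, ℝ) :=
    MvPolynomial.aeval (fun i => ⟨fun x => (x : Fin n → ℝ) i,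
      (continuous_apply i).comp continuous_subtype_val⟩) with hφ
  have heval : ∀ (q : MvPolynomial (Fin n) ℝ) (x : K),
      φ q x = MvPolynomial.eval ((x : Fin n → ℝ)) q := by
    intro q x
    have h1 : (ContinuousMap.evalAlgHom ℝ ℝ x) (φ q)
        = MvPolynomial.aeval (fun i => (x : Fin n → ℝ) i) q := by
      rw [hφ, MvPolynomial.comp_aeval_apply]
      rfl
    have h2 : MvPolynomial.aeval (fun i => (x : Fin n → ℝ) i) q
        = MvPolynomial.eval ((x : Fin n → ℝ)) q := by
      rw [MvPolynomial.aeval_def, MvPolynomial.eval]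
      rfl
    rw [← h2, ← h1]
    rfl
  have hsep : (φ.range).SeparatesPoints := by
    intro x y hxy
    have : ∃ i, (x : Fin n → ℝ) i ≠ (y : Fin n → ℝ) i := by
      by_contra hcon; push_neg at hcon; exact hxy (Subtype.ext (funext hcon))
    obtain ⟨i, hi⟩ := this
    refine ⟨_, ⟨φ (MvPolynomial.X i), ⟨MvPolynomial.X i, rfl⟩, rfl⟩, ?_⟩
    simpa [heval] using hi
  set δ : ℝ := ε / (2 * (Real.sqrt m + 1)) with hδdef
  have hsm : (0:ℝ) ≤ Real.sqrt m := Real.sqrt_nonneg _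
  have hδ : 0 < δ := by positivity
  have hex : ∀ k : Fin m, ∃ q : MvPolynomial (Fin n) ℝ,
      ∀ x : K, |MvPolynomial.eval ((x : Fin n → ℝ)) q - h x k| < δ := by
    intro k
    obtain ⟨g, hg⟩ := ContinuousMap.exists_mem_subalgebra_near_continuous_of_separatesPoints
      φ.range hsep (fun x : K => h x k)
      (((continuous_apply k).comp hc).comp continuous_subtype_val) δ hδ
    obtain ⟨q, hq⟩ := g.2
    refine ⟨q, fun x => ?_⟩
    have h2 : φ q = (g : C(K, ℝ)) := hq
    rw [← heval q x, h2]
    simpa [Real.norm_eq_abs] using hg x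
  choose p hp using hex
  refine ⟨p, fun x hx => ?_⟩
  set c : ℝ := (Fintype.card G : ℝ)⁻¹ with hc'
  have hcard : (0:ℝ) < (Fintype.card G : ℝ) := by positivity
  set L := (WithLp.linearEquiv 2 ℝ (Fin m → ℝ)).symm with hL
  have hinv : ∀ g : G, ((ρX g : Matrix (Fin n) (Fin n) ℝ))⁻¹
      = ((ρX g⁻¹ : Matrix.orthogonalGroup (Fin n) ℝ) : Matrix (Fin n) (Fin n) ℝ) := by
    intro g
    refine Matrix.inv_eq_left_inv ?_
    rw [← Submonoid.coe_mul, ← MonoidHom.map_mul, inv_mul_cancel, MonoidHom.map_one]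
    simp
  set y : G → (Fin n → ℝ) := fun g =>
    ((ρX g : Matrix (Fin n) (Fin n) ℝ))⁻¹.mulVec x with hy
  have hyK : ∀ g, y g ∈ K := by
    intro g
    rw [hy]; simp only [hinv]
    exact hKinv g⁻¹ x hx
  have hxy : ∀ g : G, (ρX g : Matrix (Fin n) (Fin n) ℝ).mulVec (y g) = x := by
    intro g
    rw [hy, mulVec_mulVec, hinv, ← Submonoid.coe_mul, ← MonoidHom.map_mul, mul_inv_cancel, MonoidHom.map_one]
    simp
  have hhx : ∀ g : G, h x = (ρY g : Matrix (Fin m) (Fin m) ℝ).mulVec (h (y g)) := by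
    intro g; rw [← hequiv g (y g), hxy g]
  set T : G → (Fin m → ℝ) := fun g => (ρY g : Matrix (Fin m) (Fin m) ℝ).mulVec
    (fun a => MvPolynomial.eval (y g) (p a)) with hT
  have hbound : ∀ g : G, euclNorm (T g - h x) ≤ Real.sqrt m * δ := by
    intro g
    have hrw : T g - h x = (ρY g : Matrix (Fin m) (Fin m) ℝ).mulVec
        ((fun a => MvPolynomial.eval (y g) (p a)) - h (y g)) := by
      rw [hT, hhx g, mulVec_sub]
    rw [hrw, euclNorm_mulVec]
    have hw : ∀ k, |((fun a => MvPolynomial.eval (y g) (p a)) - h (y g)) k| ≤ δ := by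
      intro k
      have := hp k ⟨y g, hyK g⟩
      simpa using this.le
    calc euclNorm ((fun a => MvPolynomial.eval (y g) (p a)) - h (y g))
        ≤ Real.sqrt (∑ _k : Fin m, δ ^ 2) := by
          apply Real.sqrt_le_sqrt
          apply Finset.sum_le_sum
          intro k _
          calc ((fun a => MvPolynomial.eval (y g) (p a)) - h (y g)) k ^ 2
              = |((fun a => MvPolynomial.eval (y g) (p a)) - h (y g)) k| ^ 2 :=
                (sq_abs _).symm
            _ ≤ δ ^ 2 := pow_le_pow_left₀ (abs_nonneg _) (hw k) 2
      _ = Real.sqrt m * δ := by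
          rw [Finset.sum_const, Finset.card_univ, Fintype.card_fin, nsmul_eq_mul,
            Real.sqrt_mul (Nat.cast_nonneg m), Real.sqrt_sq hδ.le]
  have hone : c • ((Fintype.card G : ℕ) • h x) = h x := by
    rw [← Nat.cast_smul_eq_nsmul ℝ, smul_smul, hc',
      inv_mul_cancel₀ (ne_of_gt hcard), one_smul]
  have hmain : (c • (∑ g : G, T g) - h x) = c • (∑ g : G, (T g - h x)) := by
    rw [Finset.sum_sub_distrib, smul_sub, Finset.sum_const, Finset.card_univ, hone]
  rw [hmain, euclNorm_eq_norm, _root_.map_smul, map_sum, ← hL]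
  have hnormle : ‖c • ∑ g : G, L (T g - h x)‖
      ≤ c * ((Fintype.card G : ℝ) * (Real.sqrt m * δ)) := by
    rw [norm_smul]
    have h1 : ‖∑ g : G, L (T g - h x)‖ ≤ ∑ g : G, ‖L (T g - h x)‖ := norm_sum_le _ _
    have h2 : ∑ g : G, ‖L (T g - h x)‖ ≤ (Fintype.card G : ℝ) * (Real.sqrt m * δ) := by
      calc ∑ g : G, ‖L (T g - h x)‖ ≤ ∑ _g : G, Real.sqrt m * δ :=
            Finset.sum_le_sum (fun g _ => by rw [← euclNorm_eq_norm]; exact hbound g)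
        _ = (Fintype.card G : ℝ) * (Real.sqrt m * δ) := by
            rw [Finset.sum_const, Finset.card_univ, nsmul_eq_mul]
    have hcn : ‖c‖ = c := by rw [Real.norm_eq_abs, abs_of_pos (by positivity)]
    rw [hcn]
    exact mul_le_mul_of_nonneg_left (le_trans h1 h2) (by positivity)
  refine lt_of_le_of_lt hnormle ?_
  have hceq : c * ((Fintype.card G : ℝ) * (Real.sqrt m * δ)) = Real.sqrt m * δ := by
    rw [hc', ← mul_assoc, inv_mul_cancel₀ (ne_of_gt hcard), one_mul]
  rw [hceq, hδdef]
  have hD : (0:ℝ) < 2 * (Real.sqrt m + 1) := by positivity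
  calc Real.sqrt m * (ε / (2 * (Real.sqrt m + 1)))
      < (2 * (Real.sqrt m + 1)) * (ε / (2 * (Real.sqrt m + 1))) := by
        apply mul_lt_mul_of_pos_right _ (by positivity)
        nlinarith
    _ = ε := by field_simp
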